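/- arXiv:2305.15150 — 2 statements merged into one kernel-verified Lean document; each statement's English description precedes it below -/
import Mathlib

section
/- Let u and v be vertices of a directed graph such that v is not reachable from u. Then the set R_u ∪ R_v ∪ S_v is unreachable from its complement: for all vertices x ∉ R_u ∪ R_v ∪ S_v and all y ∈ R_u ∪ R_v ∪ S_v, y is not reachable from x. (Intermediate step in the proof of Theorem 2 of the paper.) -/
/-- If `v` is not reachable from `u`, then `R_u ∪ R_v ∪ S_v` is unreachable from
its complement. -/
theorem RuRvSv_unreachable_from_complement {V : Type*} (E : V → V → Prop) (u v : V)
    (huv : ¬ Relation.ReflTransGen E u v)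
    (Su : Set V) (hSu : Su = {w | Relation.ReflTransGen E u w ∧ Relation.ReflTransGen E w u})
    (Ru : Set V) (hRu : Ru = {w | w ∉ Su ∧ Relation.ReflTransGen E w u})
    (Sv : Set V) (hSv : Sv = {w | Relation.ReflTransGen E v w ∧ Relation.ReflTransGen E w v})
    (Rv : Set V) (hRv : Rv = {w | w ∉ Sv ∧ Relation.ReflTransGen E w v}) :
    ∀ x, x ∉ Ru ∪ Rv ∪ Sv → ∀ y ∈ Ru ∪ Rv ∪ Sv, ¬ Relation.ReflTransGen E x y := by
  subst hSu hRu hSv hRv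
  intro x hx y hy hxy
  simp only [Set.mem_union, Set.mem_setOf_eq, not_or] at hx hy
  have hxv : ∀ (h : Relation.ReflTransGen E x v), False := by
    intro h
    have hvx : Relation.ReflTransGen E v x := by
      by_contra h'
      exact hx.1.2 ⟨fun hc => h' hc.1, h⟩
    exact hx.2 ⟨hvx, h⟩
  rcases hy with (⟨⟨hy1, hy2⟩ | ⟨hy1, hy2⟩⟩ | ⟨hy1, hy2⟩)
  · -- y ∈ Ru : y reaches u
    have hxu : Relation.ReflTransGen E x u := hxy.trans hy2
    -- x ∉ Ru, so x ∈ Su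
    have hxSu : Relation.ReflTransGen E u x := by
      by_contra h
      exact hx.1.1 ⟨fun hc => h hc.1, hxu⟩
    exact hy1 ⟨hxSu.trans hxy, hy2⟩
  · exact hxv (hxy.trans hy2)
  · exact hxv (hxy.trans hy2)
end

section
/- Acyclicity of dependency graphs (combinatorial core of the linearizability proof, Appendix A): let V be a type of vertices, α a linearly ordered type, τ : V → α a labelling, W ⊆ V a set (of 'write' vertices), and R a transitive and irreflexive binary relation on V (the 'real-time' order). Let E be a binary relation on V such that: (i) for all a, b, if E a b then τ(a) ≤ τ(b); (ii) for all a, b, if E a b and b ∈ W then τ(a) < τ(b); and (iii) for all a, b, if E a b, a ∉ W and b ∉ W, then R a b. Then E has no cycles: for every vertex x, (x, x) does not lie in the transitive closure of E. -/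
/-- Acyclicity of dependency graphs: given a labelling `τ` into a linear order,
a set `W` of write vertices and a strict (transitive and irreflexive) real-time
order `R`, any relation `E` that is non-decreasing on labels, strictly increasing
into writes, and contained in `R` between non-writes, has no cycles. -/
theorem dependency_graph_acyclic {V : Type*} {α : Type*} [LinearOrder α]
    (τ : V → α) (W : Set V) (R : V → V → Prop)
    (hRtrans : Transitive R) (hRirrefl : Irreflexive R)
    (E : V → V → Prop)
    (h1 : ∀ a b, E a b → τ a ≤ τ b)
    (h2 : ∀ a b, E a b → b ∈ W → τ a < τ b)
    (h3 : ∀ a b, E a b → a ∉ W → b ∉ W → R a b) :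
    ∀ x : V, ¬ Relation.TransGen E x x := by
  have key : ∀ x y : V, Relation.TransGen E x y →
      τ x < τ y ∨ (τ x = τ y ∧ y ∉ W ∧ (x ∉ W → R x y)) := by
    intro x y h
    induction h with
    | single hxy =>
      rename_i b
      by_cases hb : b ∈ W
      · exact Or.inl (h2 _ _ hxy hb)
      · rcases lt_or_eq_of_le (h1 _ _ hxy) with h | h
        · exact Or.inl h
        · exact Or.inr ⟨h, hb, fun hx => h3 _ _ hxy hx hb⟩
    | @tail b c hxy hyz ih =>
      by_cases hc : c ∈ W
      · rcases ih with h | ⟨h, _, _⟩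
        · exact Or.inl (lt_trans h (h2 _ _ hyz hc))
        · exact Or.inl (h ▸ h2 _ _ hyz hc)
      · rcases ih with h | ⟨heq, hb, hr⟩
        · exact Or.inl (lt_of_lt_of_le h (h1 _ _ hyz))
        · rcases lt_or_eq_of_le (h1 _ _ hyz) with h | h
          · exact Or.inl (heq ▸ h)
          · exact Or.inr ⟨heq.trans h, hc,
              fun hx => hRtrans (hr hx) (h3 _ _ hyz hb hc)⟩
  intro x hx
  rcases key x x hx with h | ⟨_, hw, hr⟩
  · exact lt_irrefl _ h
  · exact hRirrefl x (hr hw)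
end
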